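/- arXiv:0910.0639 — 2 statements merged into one kernel-verified Lean document; each statement's English description precedes it below -/
import Mathlib

section
/- Let u(x) be the even function equal to x^{-α} sin(x^β) for x > 0, with α > 1 and β > α + 1. Then u ∈ L¹(ℝ) ∩ L²(ℝ), and the Miura potential q = u' + u² equals β·sign(x)·|x|^{β-α-1}·cos|x|^β + q̃(x) for some bounded function q̃; in particular q is unbounded. -/
open MeasureTheory Set

private lemma hasDerivAt_aux (α β : ℝ) {t : ℝ} (ht : 0 < t) :
    HasDerivAt (fun y : ℝ => y ^ (-α) * Real.sin (y ^ β))
      (-α * t ^ (-α - 1) * Real.sin (t ^ β) + β * t ^ (β - α - 1) * Real.cos (t ^ β)) t := by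
  have h1 : HasDerivAt (fun y : ℝ => y ^ (-α)) (-α * t ^ (-α - 1)) t :=
    Real.hasDerivAt_rpow_const (Or.inl ht.ne')
  have h2 : HasDerivAt (fun y : ℝ => y ^ β) (β * t ^ (β - 1)) t :=
    Real.hasDerivAt_rpow_const (Or.inl ht.ne')
  have h3 : HasDerivAt (fun y : ℝ => Real.sin (y ^ β))
      (Real.cos (t ^ β) * (β * t ^ (β - 1))) t := (Real.hasDerivAt_sin _).comp t h2
  have h := h1.mul h3
  refine h.congr_deriv ?_
  have hsplit : t ^ (β - α - 1) = t ^ (-α) * t ^ (β - 1) := by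
    rw [← Real.rpow_add ht]; ring_nf
  rw [hsplit]; ring

private lemma deriv_u_eq (α β : ℝ) (u : ℝ → ℝ)
    (hu : ∀ x : ℝ, x ≠ 0 → u x = |x| ^ (-α) * Real.sin (|x| ^ β))
    {x : ℝ} (hx : x ≠ 0) :
    deriv u x = Real.sign x *
      (-α * |x| ^ (-α - 1) * Real.sin (|x| ^ β) + β * |x| ^ (β - α - 1) * Real.cos (|x| ^ β)) := by
  rcases hx.lt_or_gt with hneg | hpos
  · have hev : u =ᶠ[nhds x] fun y : ℝ => (-y) ^ (-α) * Real.sin ((-y) ^ β) := by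
      filter_upwards [Iio_mem_nhds hneg] with y hy
      rw [hu y (ne_of_lt hy), abs_of_neg hy]
    have h0 : HasDerivAt (fun y : ℝ => (-y) ^ (-α) * Real.sin ((-y) ^ β))
        ((-α * (-x) ^ (-α - 1) * Real.sin ((-x) ^ β)
          + β * (-x) ^ (β - α - 1) * Real.cos ((-x) ^ β)) * (-1)) x :=
      (hasDerivAt_aux α β (by linarith : (0:ℝ) < -x)).comp x (hasDerivAt_neg x)
    rw [hev.deriv_eq, h0.deriv, abs_of_neg hneg, Real.sign_of_neg hneg]
    ring
  · have hev : u =ᶠ[nhds x] fun y : ℝ => y ^ (-α) * Real.sin (y ^ β) := by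
      filter_upwards [Ioi_mem_nhds hpos] with y hy
      rw [hu y (ne_of_gt hy), abs_of_pos hy]
    rw [hev.deriv_eq, (hasDerivAt_aux α β hpos).deriv, abs_of_pos hpos,
      Real.sign_of_pos hpos]
    ring

/-- For the even function `u(x) = |x|^{-α} sin(|x|^β)` with `α > 1`, `β > α + 1`,
one has `u ∈ L¹(ℝ) ∩ L²(ℝ)`, and the Miura potential `q = u' + u²` equals
`β sign(x) |x|^{β-α-1} cos(|x|^β)` plus a bounded function; in particular `q`
is unbounded. -/
theorem stmt_6 (α β : ℝ) (hα : 1 < α) (hβ : α + 1 < β) (u : ℝ → ℝ)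
    (hu : ∀ x : ℝ, x ≠ 0 → u x = |x| ^ (-α) * Real.sin (|x| ^ β))
    (hu0 : u 0 = 0) :
    (Integrable u ∧ Integrable (fun x => (u x) ^ 2))
    ∧ (∃ qt : ℝ → ℝ, (∃ M : ℝ, ∀ x, |qt x| ≤ M) ∧
        ∀ x : ℝ, x ≠ 0 →
          deriv u x + (u x) ^ 2
            = β * Real.sign x * |x| ^ (β - α - 1) * Real.cos (|x| ^ β) + qt x)
    ∧ ¬ ∃ M : ℝ, ∀ x : ℝ, |deriv u x + (u x) ^ 2| ≤ M := by
  have hβ0 : (0:ℝ) < β := by linarith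
  -- basic bounds on u
  have ub2 : ∀ x : ℝ, x ≠ 0 → |u x| ≤ |x| ^ (-α) := by
    intro x hx
    rw [hu x hx, abs_mul, abs_of_nonneg (Real.rpow_nonneg (abs_nonneg x) _)]
    exact mul_le_of_le_one_right (Real.rpow_nonneg (abs_nonneg x) _) (Real.abs_sin_le_one _)
  have ub1 : ∀ x : ℝ, |u x| ≤ 1 := by
    intro x
    rcases eq_or_ne x 0 with rfl | hx
    · simp [hu0]
    rcases le_or_gt |x| 1 with hle | hgt
    · rw [hu x hx, abs_mul, abs_of_nonneg (Real.rpow_nonneg (abs_nonneg x) _)]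
      have hsin : |Real.sin (|x| ^ β)| ≤ |x| ^ β := by
        have h := Real.abs_sin_le_abs (x := |x| ^ β)
        rwa [abs_of_nonneg (Real.rpow_nonneg (abs_nonneg x) _)] at h
      calc |x| ^ (-α) * |Real.sin (|x| ^ β)|
          ≤ |x| ^ (-α) * |x| ^ β :=
            mul_le_mul_of_nonneg_left hsin (Real.rpow_nonneg (abs_nonneg x) _)
        _ = |x| ^ (-α + β) := (Real.rpow_add (abs_pos.2 hx) _ _).symm
        _ ≤ 1 := Real.rpow_le_one (abs_nonneg x) hle (by linarith)
    · calc |u x| ≤ |x| ^ (-α) := ub2 x hx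
        _ ≤ 1 := Real.rpow_le_one_of_one_le_of_nonpos hgt.le (by linarith)
  -- measurability
  have hfm : Measurable fun x : ℝ => |x| ^ (-α) * Real.sin (|x| ^ β) :=
    (measurable_abs.pow_const (-α)).mul (measurable_abs.pow_const β).sin
  have huf : u =ᵐ[volume] fun x : ℝ => |x| ^ (-α) * Real.sin (|x| ^ β) := by
    rw [Filter.EventuallyEq, ae_iff]
    refine measure_mono_null (fun x hx => ?_) (measure_singleton (0:ℝ))
    simp only [mem_setOf_eq] at hx
    by_contra h
    exact hx (hu x h)
  have hmeas : AEStronglyMeasurable u volume :=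
    (hfm.aestronglyMeasurable).congr huf.symm
  have hmeas2 : AEStronglyMeasurable (fun x => (u x) ^ 2) volume := hmeas.pow 2
  -- the universe splits
  have hsplit : (Iio (-1:ℝ)) ∪ (Icc (-1:ℝ) 1) ∪ (Ioi (1:ℝ)) = univ := by
    ext x; simp only [mem_union, mem_Iio, mem_Icc, mem_Ioi, mem_univ, iff_true]
    rcases lt_or_ge x (-1) with h | h
    · exact Or.inl (Or.inl h)
    rcases le_or_gt x 1 with h' | h'
    · exact Or.inl (Or.inr ⟨h, h'⟩)
    · exact Or.inr h'
  -- generic integrability from bounds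
  have key : ∀ (v : ℝ → ℝ) (p : ℝ), p < -1 → AEStronglyMeasurable v volume →
      (∀ x, |v x| ≤ 1) → (∀ x : ℝ, 1 < |x| → |v x| ≤ |x| ^ p) → Integrable v := by
    intro v p hp hvm hv1 hvp
    rw [← integrableOn_univ, ← hsplit, integrableOn_union, integrableOn_union]
    refine ⟨⟨?_, ?_⟩, ?_⟩
    · -- Iio (-1)
      have hbase : IntegrableOn (fun x : ℝ => (-x) ^ p) (Iio (-1:ℝ)) := by
        have h1 : IntegrableOn (fun x : ℝ => x ^ p) (Ioi (1:ℝ)) :=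
          integrableOn_Ioi_rpow_of_lt hp one_pos
        have h2 := ((Measure.measurePreserving_neg (volume : Measure ℝ)).integrableOn_comp_preimage
          (Homeomorph.neg ℝ).measurableEmbedding (s := Ioi (1:ℝ))).2 h1
        have hset : (Neg.neg ⁻¹' Ioi (1:ℝ)) = Iio (-1:ℝ) := by
          ext y; simp [lt_neg]
        simpa [Function.comp_def, hset] using h2
      refine hbase.mono' hvm.restrict ?_
      filter_upwards [ae_restrict_mem measurableSet_Iio] with x hx
      have hx0 : x < 0 := lt_trans (mem_Iio.mp hx) (by norm_num)
      have hx1 : 1 < |x| := by rw [abs_of_neg hx0]; linarith [mem_Iio.mp hx]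
      calc ‖v x‖ = |v x| := rfl
        _ ≤ |x| ^ p := hvp x hx1
        _ = (-x) ^ p := by rw [abs_of_neg hx0]
    · -- Icc (-1) 1
      refine (integrableOn_const (C := (1:ℝ)) isCompact_Icc.measure_lt_top.ne).mono'
        hvm.restrict ?_
      exact Filter.Eventually.of_forall fun x => hv1 x
    · -- Ioi 1
      refine (integrableOn_Ioi_rpow_of_lt hp one_pos).mono' hvm.restrict ?_
      filter_upwards [ae_restrict_mem measurableSet_Ioi] with x hx
      have hx0 : (0:ℝ) < x := lt_trans one_pos (mem_Ioi.mp hx)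
      have hx1 : 1 < |x| := by rwa [abs_of_pos hx0]
      calc ‖v x‖ = |v x| := rfl
        _ ≤ |x| ^ p := hvp x hx1
        _ = x ^ p := by rw [abs_of_pos hx0]
  have hInt1 : Integrable u := by
    refine key u (-α) (by linarith) hmeas ub1 fun x hx => ?_
    exact ub2 x (fun h => by simp [h] at hx; linarith)
  have hInt2 : Integrable fun x => (u x) ^ 2 := by
    refine key _ (-(2*α)) (by linarith) hmeas2 (fun x => ?_) fun x hx => ?_
    · rw [abs_pow]; exact pow_le_one₀ (abs_nonneg _) (ub1 x)
    · have hx0 : x ≠ 0 := fun h => by simp [h] at hx; linarith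
      calc |u x ^ 2| = |u x| ^ 2 := abs_pow _ _
        _ ≤ (|x| ^ (-α)) ^ 2 := by
            exact pow_le_pow_left₀ (abs_nonneg _) (ub2 x hx0) 2
        _ = |x| ^ (-(2*α)) := by
            rw [← Real.rpow_natCast (|x| ^ (-α)) 2, ← Real.rpow_mul (abs_nonneg x)]
            norm_num; ring_nf
  refine ⟨⟨hInt1, hInt2⟩, ?_, ?_⟩
  · -- the decomposition with bounded remainder
    refine ⟨fun x => if x = 0 then 0 else
        deriv u x + u x ^ 2 - β * Real.sign x * |x| ^ (β - α - 1) * Real.cos (|x| ^ β),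
      ⟨α + 1, fun x => ?_⟩, fun x hx => by simp only [if_neg hx]; ring⟩
    by_cases hx : x = 0
    · simp only [hx, if_pos]; rw [abs_zero]; linarith
    simp only [if_neg hx]
    have hd := deriv_u_eq α β u hu hx
    have hre : deriv u x + u x ^ 2
        - β * Real.sign x * |x| ^ (β - α - 1) * Real.cos (|x| ^ β)
        = Real.sign x * (-α * |x| ^ (-α - 1) * Real.sin (|x| ^ β)) + u x ^ 2 := by
      rw [hd]; ring
    rw [hre]
    have hsign : |Real.sign x| = 1 := by
      rcases lt_or_gt_of_ne hx with h | h
      · simp [Real.sign_of_neg h]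
      · simp [Real.sign_of_pos h]
    have hA : |x| ^ (-α - 1) * |Real.sin (|x| ^ β)| ≤ 1 := by
      rcases le_or_gt |x| 1 with hle | hgt
      · have hsin : |Real.sin (|x| ^ β)| ≤ |x| ^ β := by
          have h := Real.abs_sin_le_abs (x := |x| ^ β)
          rwa [abs_of_nonneg (Real.rpow_nonneg (abs_nonneg x) _)] at h
        calc |x| ^ (-α - 1) * |Real.sin (|x| ^ β)| ≤ |x| ^ (-α - 1) * |x| ^ β :=
              mul_le_mul_of_nonneg_left hsin (Real.rpow_nonneg (abs_nonneg x) _)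
          _ = |x| ^ (-α - 1 + β) := (Real.rpow_add (abs_pos.2 hx) _ _).symm
          _ ≤ 1 := Real.rpow_le_one (abs_nonneg x) hle (by linarith)
      · calc |x| ^ (-α - 1) * |Real.sin (|x| ^ β)|
            ≤ |x| ^ (-α - 1) * 1 :=
              mul_le_mul_of_nonneg_left (Real.abs_sin_le_one _)
                (Real.rpow_nonneg (abs_nonneg x) _)
          _ = |x| ^ (-α - 1) := mul_one _
          _ ≤ 1 := Real.rpow_le_one_of_one_le_of_nonpos hgt.le (by linarith)
    have h1 : |Real.sign x * (-α * |x| ^ (-α - 1) * Real.sin (|x| ^ β))|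
        = α * (|x| ^ (-α - 1) * |Real.sin (|x| ^ β)|) := by
      rw [abs_mul, hsign, one_mul, abs_mul, abs_mul, abs_neg,
        abs_of_pos (show (0:ℝ) < α by linarith),
        abs_of_nonneg (Real.rpow_nonneg (abs_nonneg x) _)]
      ring
    have h2 : |u x ^ 2| ≤ 1 := by rw [abs_pow]; exact pow_le_one₀ (abs_nonneg _) (ub1 x)
    have habs := abs_add_le (Real.sign x * (-α * |x| ^ (-α - 1) * Real.sin (|x| ^ β))) (u x ^ 2)
    rw [h1] at habs
    have h3 : α * (|x| ^ (-α - 1) * |Real.sin (|x| ^ β)|) ≤ α * 1 :=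
      mul_le_mul_of_nonneg_left hA (by linarith)
    linarith
  · -- unboundedness
    rintro ⟨M, hM⟩
    obtain ⟨n, hn⟩ : ∃ n : ℕ, M / β < (((n:ℝ) + 1) * (2 * Real.pi)) ^ ((β - α - 1) / β) := by
      have h0 : Filter.Tendsto (fun n : ℕ => ((n:ℝ))) Filter.atTop Filter.atTop :=
        tendsto_natCast_atTop_atTop
      have h0' : Filter.Tendsto (fun n : ℕ => ((n:ℝ) + 1)) Filter.atTop Filter.atTop :=
        Filter.tendsto_atTop_add_const_right _ 1 h0
      have hpi : (0:ℝ) < 2 * Real.pi := by positivity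
      have ht1 : Filter.Tendsto (fun n : ℕ => ((n:ℝ) + 1) * (2 * Real.pi))
          Filter.atTop Filter.atTop := h0'.atTop_mul_const hpi
      have ht2 := (tendsto_rpow_atTop (show 0 < (β - α - 1) / β from
        div_pos (by linarith) hβ0)).comp ht1
      simpa [Function.comp_def] using (ht2.eventually_gt_atTop (M / β)).exists
    set T : ℝ := ((n:ℝ) + 1) * (2 * Real.pi) with hTdef
    have hT : 0 < T := by positivity
    set x : ℝ := T ^ (β⁻¹) with hxdef
    have hx : 0 < x := Real.rpow_pos_of_pos hT _
    have hxb : x ^ β = T := by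
      rw [hxdef, ← Real.rpow_mul hT.le, inv_mul_cancel₀ hβ0.ne', Real.rpow_one]
    have hsinT : Real.sin T = 0 := by
      have hrw : T = ((2 * (n + 1) : ℕ) : ℝ) * Real.pi := by rw [hTdef]; push_cast; ring
      rw [hrw, Real.sin_nat_mul_pi]
    have hcosT : Real.cos T = 1 := by
      have hrw : T = ((n + 1 : ℕ) : ℝ) * (2 * Real.pi) := by rw [hTdef]; push_cast; ring
      rw [hrw, Real.cos_nat_mul_two_pi]
    have hux : u x = 0 := by
      rw [hu x hx.ne', abs_of_pos hx, hxb, hsinT, mul_zero]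
    have hderiv : deriv u x = β * x ^ (β - α - 1) := by
      rw [deriv_u_eq α β u hu hx.ne', Real.sign_of_pos hx, abs_of_pos hx, hxb, hsinT, hcosT]
      ring
    have hval : deriv u x + u x ^ 2 = β * T ^ ((β - α - 1) / β) := by
      rw [hderiv, hux, hxdef, ← Real.rpow_mul hT.le]
      rw [show β⁻¹ * (β - α - 1) = (β - α - 1) / β by field_simp]
      ring
    have hMx := hM x
    rw [hval] at hMx
    have hlt : M < β * T ^ ((β - α - 1) / β) := by
      have := (div_lt_iff₀ hβ0).mp hn
      linarith
    have := le_abs_self (β * T ^ ((β - α - 1) / β))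
    linarith
end

section
/- Suppose w_+ ∈ L¹(0,∞)∩L²(0,∞) and w_- ∈ L¹(-∞,0)∩L²(-∞,0) are real-valued and α ≥ 0. Define y_+(x) = exp(∫₀ˣ w_+) for x > 0, y_-(x) = exp(∫₀ˣ w_-) for x < 0, extend y_+ to ℝ⁻ by y_+(x) = y_-(x)(1 + α∫ₓ⁰ y_-(s)⁻² ds) and y_- to ℝ⁺ by y_-(x) = y_+(x)(1 + α∫₀ˣ y_+(s)⁻² ds). Then u_+ := y_+'/y_+ belongs to L²(ℝ)∩L¹(ℝ⁺), u_- := y_-'/y_- belongs to L²(ℝ)∩L¹(ℝ⁻), and v := u_- - u_+ is continuous with v(0) = α. -/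
open MeasureTheory Set

/-- Construction of extremal Riccati representatives from data `(w₊, w₋, α)`:
`u₊ ∈ L²(ℝ) ∩ L¹(ℝ⁺)`, `u₋ ∈ L²(ℝ) ∩ L¹(ℝ⁻)`, and `v = u₋ - u₊` extends to a
continuous function with `v(0) = α`. -/
theorem stmt_8 (wp wm : ℝ → ℝ) (α : ℝ) (hα : 0 ≤ α)
    (hwp1 : IntegrableOn wp (Set.Ioi 0))
    (hwp2 : IntegrableOn (fun x => (wp x) ^ 2) (Set.Ioi 0))
    (hwm1 : IntegrableOn wm (Set.Iio 0))
    (hwm2 : IntegrableOn (fun x => (wm x) ^ 2) (Set.Iio 0))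
    (yp ym up um : ℝ → ℝ)
    (hyp_pos : ∀ x : ℝ, 0 < x → yp x = Real.exp (∫ t in (0:ℝ)..x, wp t))
    (hym_neg : ∀ x : ℝ, x < 0 → ym x = Real.exp (∫ t in (0:ℝ)..x, wm t))
    (hyp_neg : ∀ x : ℝ, x < 0 →
      yp x = ym x * (1 + α * ∫ s in x..(0:ℝ), ((ym s) ^ 2)⁻¹))
    (hym_pos : ∀ x : ℝ, 0 < x →
      ym x = yp x * (1 + α * ∫ s in (0:ℝ)..x, ((yp s) ^ 2)⁻¹))
    (hup_pos : ∀ x : ℝ, 0 < x → up x = wp x)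
    (hup_neg : ∀ x : ℝ, x < 0 →
      up x = wm x - α * ((ym x) ^ 2)⁻¹ / (1 + α * ∫ s in x..(0:ℝ), ((ym s) ^ 2)⁻¹))
    (hum_neg : ∀ x : ℝ, x < 0 → um x = wm x)
    (hum_pos : ∀ x : ℝ, 0 < x →
      um x = wp x + α * ((yp x) ^ 2)⁻¹ / (1 + α * ∫ s in (0:ℝ)..x, ((yp s) ^ 2)⁻¹)) :
    (Integrable (fun x => (up x) ^ 2) ∧ IntegrableOn up (Set.Ioi 0))
    ∧ (Integrable (fun x => (um x) ^ 2) ∧ IntegrableOn um (Set.Iio 0))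
    ∧ ∃ v : ℝ → ℝ, Continuous v ∧ v 0 = α ∧ ∀ x : ℝ, x ≠ 0 → v x = um x - up x := by
  classical
  have hne : ∀ᵐ t : ℝ ∂volume, t ≠ (0:ℝ) := by
    rw [ae_iff]; simp
  set w : ℝ → ℝ := fun x => if x < 0 then wm x else wp x with hwdef
  have hwIio : IntegrableOn w (Iio 0) :=
    hwm1.congr_fun (fun x hx => (if_pos (mem_Iio.mp hx)).symm) measurableSet_Iio
  have hwIoi : IntegrableOn w (Ioi 0) :=
    hwp1.congr_fun (fun x hx => (if_neg (not_lt.mpr (le_of_lt (mem_Ioi.mp hx)))).symm)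
      measurableSet_Ioi
  have hw1 : Integrable w := by
    rw [← integrableOn_univ, ← Set.Iio_union_Ici (a := (0:ℝ))]
    exact hwIio.union (Iff.mpr integrableOn_Ici_iff_integrableOn_Ioi hwIoi)
  have hw2 : Integrable (fun x => w x ^ 2) := by
    rw [← integrableOn_univ, ← Set.Iio_union_Ici (a := (0:ℝ))]
    refine IntegrableOn.union ?_ (Iff.mpr integrableOn_Ici_iff_integrableOn_Ioi ?_)
    · exact hwm2.congr_fun (fun x hx => by
        simp only [hwdef]; rw [if_pos (mem_Iio.mp hx)]) measurableSet_Iio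
    · exact hwp2.congr_fun (fun x hx => by
        simp only [hwdef]; rw [if_neg (not_lt.mpr (le_of_lt (mem_Ioi.mp hx)))]) measurableSet_Ioi
  set M : ℝ := ∫ x, |w x| with hMdef
  have habs : Integrable (fun x => |w x|) := hw1.abs
  have hkey : ∀ x : ℝ, |∫ t in (0:ℝ)..x, w t| ≤ M := by
    intro x
    have h1 : |∫ t in (0:ℝ)..x, w t| ≤ |∫ t in (0:ℝ)..x, (|w t|)| := by
      simpa [Real.norm_eq_abs] using
        intervalIntegral.norm_integral_le_abs_integral_norm (a := 0) (b := x) (f := w)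
          (μ := volume)
    refine h1.trans ?_
    rcases le_total 0 x with hx | hx
    · rw [intervalIntegral.integral_of_le hx,
        abs_of_nonneg (setIntegral_nonneg measurableSet_Ioc (fun t _ => abs_nonneg _))]
      exact setIntegral_le_integral habs (ae_of_all _ fun t => abs_nonneg _)
    · rw [intervalIntegral.integral_of_ge hx, abs_neg,
        abs_of_nonneg (setIntegral_nonneg measurableSet_Ioc (fun t _ => abs_nonneg _))]
      exact setIntegral_le_integral habs (ae_of_all _ fun t => abs_nonneg _)
  set Y : ℝ → ℝ := fun x => Real.exp (∫ t in (0:ℝ)..x, w t) with hYdef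
  have hYc : Continuous Y :=
    Real.continuous_exp.comp
      (intervalIntegral.continuous_primitive (fun a b => hw1.intervalIntegrable) 0)
  have hYpos : ∀ x, 0 < Y x := fun x => Real.exp_pos _
  have hYub : ∀ x, Y x ≤ Real.exp M := fun x =>
    Real.exp_le_exp.mpr ((le_abs_self _).trans (hkey x))
  have hYlb : ∀ x, Real.exp (-M) ≤ Y x := fun x =>
    Real.exp_le_exp.mpr (abs_le.mp (hkey x)).1
  set Yi : ℝ → ℝ := fun x => ((Y x) ^ 2)⁻¹ with hYidef
  have hYic : Continuous Yi := (hYc.pow 2).inv₀ (fun x => pow_ne_zero 2 (hYpos x).ne')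
  have hYipos : ∀ x, 0 < Yi x := fun x => inv_pos.mpr (pow_pos (hYpos x) 2)
  set cL : ℝ := (Real.exp M ^ 2)⁻¹ with hcLdef
  have hcLpos : 0 < cL := by positivity
  have hYiLB : ∀ x, cL ≤ Yi x := by
    intro x
    have h : Y x ^ 2 ≤ Real.exp M ^ 2 := pow_le_pow_left₀ (hYpos x).le (hYub x) 2
    exact inv_anti₀ (pow_pos (hYpos x) 2) h
  set cU : ℝ := (Real.exp (-M) ^ 2)⁻¹ with hcUdef
  have hYiUB : ∀ x, Yi x ≤ cU := by
    intro x
    have h : Real.exp (-M) ^ 2 ≤ Y x ^ 2 := pow_le_pow_left₀ (Real.exp_pos _).le (hYlb x) 2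
    exact inv_anti₀ (pow_pos (Real.exp_pos _) 2) h
  set G : ℝ → ℝ := fun x => ∫ t in (0:ℝ)..x, Yi t with hGdef
  have hGc : Continuous G :=
    intervalIntegral.continuous_primitive (fun a b => hYic.intervalIntegrable a b) 0
  have hG0 : G 0 = 0 := intervalIntegral.integral_same
  have hGpos : ∀ x, 0 ≤ x → cL * x ≤ G x := by
    intro x hx
    have h := intervalIntegral.integral_mono_on (μ := volume) hx
      intervalIntegrable_const (hYic.intervalIntegrable 0 x)
      (fun t _ => hYiLB t)
    simpa [intervalIntegral.integral_const, smul_eq_mul, mul_comm] using h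
  have hGneg : ∀ x, x ≤ 0 → cL * (-x) ≤ -G x := by
    intro x hx
    have h := intervalIntegral.integral_mono_on (μ := volume) hx
      intervalIntegrable_const (hYic.intervalIntegrable x 0)
      (fun t _ => hYiLB t)
    have h2 : (∫ t in x..(0:ℝ), Yi t) = -G x := by
      rw [intervalIntegral.integral_symm 0 x]
    rw [h2] at h
    simpa [intervalIntegral.integral_const, smul_eq_mul, mul_comm] using h
  have hGabs : ∀ x, cL * |x| ≤ |G x| := by
    intro x
    rcases le_total 0 x with hx | hx
    · have h := hGpos x hx
      have h0 : 0 ≤ G x := le_trans (by positivity) h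
      rw [abs_of_nonneg hx, abs_of_nonneg h0]; exact h
    · have h := hGneg x hx
      have h0 : G x ≤ 0 := by nlinarith [hcLpos.le]
      rw [abs_of_nonpos hx, abs_of_nonpos h0]; exact h
  have hGabs_neg : ∀ x : ℝ, x ≤ 0 → |G x| = ∫ t in x..(0:ℝ), Yi t := by
    intro x hx
    have h := hGneg x hx
    have h0 : G x ≤ 0 := by nlinarith [hcLpos.le]
    rw [abs_of_nonpos h0, intervalIntegral.integral_symm 0 x]
  have hGabs_pos : ∀ x : ℝ, 0 ≤ x → |G x| = ∫ t in (0:ℝ)..x, Yi t := by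
    intro x hx
    have h := hGpos x hx
    have h0 : 0 ≤ G x := le_trans (by positivity) h
    rw [abs_of_nonneg h0]
  set v : ℝ → ℝ := fun x => α * Yi x / (1 + α * |G x|) with hvdef
  have hDpos : ∀ x, 0 < 1 + α * |G x| := fun x => by positivity
  have hvc : Continuous v :=
    (continuous_const.mul hYic).div (continuous_const.add (continuous_const.mul hGc.abs))
      (fun x => (hDpos x).ne')
  have hv0 : v 0 = α := by
    simp [hvdef, hYidef, hYdef, hGdef, intervalIntegral.integral_same, Real.exp_zero]
  have hvnonneg : ∀ x, 0 ≤ v x := fun x =>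
    div_nonneg (mul_nonneg hα (hYipos x).le) (hDpos x).le
  -- matching on the negative side
  have hYeq_neg : ∀ x : ℝ, x < 0 → Y x = ym x := by
    intro x hx
    rw [hym_neg x hx, hYdef]
    simp only
    congr 1
    apply intervalIntegral.integral_congr_ae
    filter_upwards [hne] with t ht hmem
    have ht0 : t < 0 := by
      rcases Set.mem_uIoc.mp hmem with ⟨h1, h2⟩ | ⟨h1, h2⟩
      · linarith
      · exact lt_of_le_of_ne h2 ht
    simp only [hwdef]; rw [if_pos ht0]
  have hGeq_neg : ∀ x : ℝ, x < 0 → |G x| = ∫ s in x..(0:ℝ), ((ym s) ^ 2)⁻¹ := by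
    intro x hx
    rw [hGabs_neg x hx.le]
    apply intervalIntegral.integral_congr_ae
    filter_upwards [hne] with t ht hmem
    have ht0 : t < 0 := by
      rcases Set.mem_uIoc.mp hmem with ⟨h1, h2⟩ | ⟨h1, h2⟩
      · exact lt_of_le_of_ne h2 ht
      · linarith
    simp only [hYidef]
    rw [hYeq_neg t ht0]
  have hYeq_pos : ∀ x : ℝ, 0 < x → Y x = yp x := by
    intro x hx
    rw [hyp_pos x hx, hYdef]
    simp only
    congr 1
    apply intervalIntegral.integral_congr_ae
    filter_upwards [hne] with t ht hmem
    have ht0 : 0 < t := by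
      rcases Set.mem_uIoc.mp hmem with ⟨h1, h2⟩ | ⟨h1, h2⟩
      · exact h1
      · linarith
    simp only [hwdef]; rw [if_neg (not_lt.mpr ht0.le)]
  have hGeq_pos : ∀ x : ℝ, 0 < x → |G x| = ∫ s in (0:ℝ)..x, ((yp s) ^ 2)⁻¹ := by
    intro x hx
    rw [hGabs_pos x hx.le]
    apply intervalIntegral.integral_congr_ae
    filter_upwards [hne] with t ht hmem
    have ht0 : 0 < t := by
      rcases Set.mem_uIoc.mp hmem with ⟨h1, h2⟩ | ⟨h1, h2⟩
      · exact h1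
      · linarith
    simp only [hYidef]
    rw [hYeq_pos t ht0]
  have hmatch : ∀ x : ℝ, x ≠ 0 → v x = um x - up x := by
    intro x hx0
    rcases hx0.lt_or_gt with hx | hx
    · rw [hum_neg x hx, hup_neg x hx, hvdef]
      simp only
      rw [hGeq_neg x hx, show Yi x = ((ym x) ^ 2)⁻¹ by
        simp only [hYidef]; rw [hYeq_neg x hx]]
      ring
    · rw [hum_pos x hx, hup_pos x hx, hvdef]
      simp only
      rw [hGeq_pos x hx, show Yi x = ((yp x) ^ 2)⁻¹ by
        simp only [hYidef]; rw [hYeq_pos x hx]]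
      ring
  -- square-integrability of v
  have hv2 : Integrable (fun x => v x ^ 2) := by
    rcases eq_or_lt_of_le hα with hα0 | hαpos
    · have hz : (fun x => v x ^ 2) = fun _ => (0:ℝ) := funext fun x => by
        simp [hvdef, ← hα0]
      rw [hz]; exact integrable_zero _ _ _
    · set C : ℝ := α * cU with hCdef
      set c : ℝ := α * cL with hcdef
      have hCpos : 0 < C := mul_pos hαpos (by positivity)
      have hcpos : 0 < c := mul_pos hαpos hcLpos
      have hvub : ∀ x, v x ≤ C / (1 + c * |x|) := by
        intro x
        have hd : (0:ℝ) < 1 + c * |x| := by positivity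
        refine div_le_div₀ hCpos.le ?_ hd ?_
        · exact mul_le_mul_of_nonneg_left (hYiUB x) hα
        · have := hGabs x
          nlinarith [abs_nonneg x]
      set m : ℝ := min 1 (c ^ 2) with hmdef
      have hmpos : 0 < m := lt_min one_pos (by positivity)
      set K : ℝ := C ^ 2 / m with hKdef
      have hbound : ∀ x : ℝ, v x ^ 2 ≤ K * (1 + x ^ 2)⁻¹ := by
        intro x
        have hd : (0:ℝ) < 1 + c * |x| := by positivity
        have h2 : v x ^ 2 ≤ C ^ 2 / (1 + c * |x|) ^ 2 := by
          calc v x ^ 2 ≤ (C / (1 + c * |x|)) ^ 2 :=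
                pow_le_pow_left₀ (hvnonneg x) (hvub x) 2
            _ = C ^ 2 / (1 + c * |x|) ^ 2 := div_pow C _ 2
        have h3 : m * (1 + x ^ 2) ≤ (1 + c * |x|) ^ 2 := by
          nlinarith [min_le_left 1 (c ^ 2), min_le_right 1 (c ^ 2), sq_abs x,
            sq_nonneg x, abs_nonneg x, hcpos.le, hmpos.le]
        have h4 : C ^ 2 / (1 + c * |x|) ^ 2 ≤ C ^ 2 / (m * (1 + x ^ 2)) := by
          apply div_le_div_of_nonneg_left (by positivity) (by positivity) h3
        have h5 : K * (1 + x ^ 2)⁻¹ = C ^ 2 / (m * (1 + x ^ 2)) := by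
          rw [hKdef, ← div_eq_mul_inv, div_div]
        rw [h5]
        exact h2.trans h4
      have hint : Integrable (fun x : ℝ => K * (1 + x ^ 2)⁻¹) := by
        simpa [div_eq_mul_inv] using
          integrable_inv_one_add_sq.const_mul K
      refine hint.mono' ((hvc.pow 2).aestronglyMeasurable) (ae_of_all _ fun x => ?_)
      rw [Real.norm_eq_abs, abs_of_nonneg (sq_nonneg _)]
      exact hbound x
  have hvmem : MemLp v 2 (volume : Measure ℝ) :=
    (memLp_two_iff_integrable_sq hvc.aestronglyMeasurable).mpr hv2
  have hwmem : MemLp w 2 (volume : Measure ℝ) :=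
    (memLp_two_iff_integrable_sq hw1.aestronglyMeasurable).mpr hw2
  -- u₊
  have hup_ae : up =ᵐ[volume] (w - (Iio (0:ℝ)).indicator v) := by
    filter_upwards [hne] with t ht
    rcases ht.lt_or_gt with h | h
    · have h1 : v t = wm t - up t := by
        rw [hmatch t ht, hum_neg t h]
      have h2 : w t = wm t := by simp only [hwdef]; rw [if_pos h]
      simp only [Pi.sub_apply, indicator_of_mem (mem_Iio.mpr h), h2]
      linarith
    · have h2 : w t = wp t := by simp only [hwdef]; rw [if_neg (not_lt.mpr h.le)]
      simp only [Pi.sub_apply, indicator_of_notMem (by simp [not_lt.mpr h.le] : t ∉ Iio (0:ℝ)),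
        h2, sub_zero]
      exact hup_pos t h
  have hupsq : Integrable (fun x => up x ^ 2) := by
    have hmem : MemLp (w - (Iio (0:ℝ)).indicator v) 2 (volume : Measure ℝ) :=
      hwmem.sub (hvmem.indicator measurableSet_Iio)
    have h1 : Integrable (fun x => (w - (Iio (0:ℝ)).indicator v) x ^ 2) :=
      (memLp_two_iff_integrable_sq hmem.aestronglyMeasurable).mp hmem
    exact h1.congr (by filter_upwards [hup_ae] with t ht; rw [ht])
  have hupIoi : IntegrableOn up (Ioi 0) :=
    hwp1.congr_fun (fun x hx => (hup_pos x (mem_Ioi.mp hx)).symm) measurableSet_Ioi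
  -- u₋
  have hum_ae : um =ᵐ[volume] (w + (Ioi (0:ℝ)).indicator v) := by
    filter_upwards [hne] with t ht
    rcases ht.lt_or_gt with h | h
    · have h2 : w t = wm t := by simp only [hwdef]; rw [if_pos h]
      simp only [Pi.add_apply, indicator_of_notMem (by simp [h.le] : t ∉ Ioi (0:ℝ)), h2,
        add_zero]
      exact hum_neg t h
    · have h1 : v t = um t - wp t := by
        rw [hmatch t ht, hup_pos t h]
      have h2 : w t = wp t := by simp only [hwdef]; rw [if_neg (not_lt.mpr h.le)]
      simp only [Pi.add_apply, indicator_of_mem (mem_Ioi.mpr h), h2]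
      linarith
  have humsq : Integrable (fun x => um x ^ 2) := by
    have hmem : MemLp (w + (Ioi (0:ℝ)).indicator v) 2 (volume : Measure ℝ) :=
      hwmem.add (hvmem.indicator measurableSet_Ioi)
    have h1 : Integrable (fun x => (w + (Ioi (0:ℝ)).indicator v) x ^ 2) :=
      (memLp_two_iff_integrable_sq hmem.aestronglyMeasurable).mp hmem
    exact h1.congr (by filter_upwards [hum_ae] with t ht; rw [ht])
  have humIio : IntegrableOn um (Iio 0) :=
    hwm1.congr_fun (fun x hx => (hum_neg x (mem_Iio.mp hx)).symm) measurableSet_Iio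
  exact ⟨⟨hupsq, hupIoi⟩, ⟨humsq, humIio⟩, v, hvc, hv0, hmatch⟩
end
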